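/- The function F : [0,∞)² → [0,∞] defined by F(r,s) := (r−s)(log r − log s) for r,s > 0, F(0,0) := 0, and F(r,0) = F(0,r) := ∞ for r > 0, is jointly convex on [0,∞)² and positively 1-homogeneous: F(λr, λs) = λ·F(r,s) for all λ > 0 and r,s ≥ 0 (with λ·∞ = ∞). -/

import Mathlib

open scoped ENNReal

/-- The integrand of the nonlocal relative Fisher information:
`F(r,s) = (r−s)(log r − log s)` for `r,s > 0`, `F(0,0) = 0`, and
`F(r,0) = F(0,r) = ∞` for `r > 0`. -/
noncomputable def Fent (r s : ℝ) : ℝ≥0∞ :=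
  if 0 < r ∧ 0 < s then ENNReal.ofReal ((r - s) * (Real.log r - Real.log s))
  else if r = 0 ∧ s = 0 then 0
  else ⊤

lemma Fent_nonneg_real {r s : ℝ} (hr : 0 < r) (hs : 0 < s) :
    0 ≤ (r - s) * (Real.log r - Real.log s) := by
  rcases le_total s r with h | h
  · exact mul_nonneg (by linarith) (sub_nonneg.2 (Real.log_le_log hs h))
  · have h1 : r - s ≤ 0 := by linarith
    have h2 : Real.log r - Real.log s ≤ 0 := sub_nonpos.2 (Real.log_le_log hr h)
    nlinarith [mul_nonneg (neg_nonneg.2 h1) (neg_nonneg.2 h2)]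

/-- log-sum inequality -/
lemma logsum {x u y v : ℝ} (hx : 0 < x) (hu : 0 < u) (hy : 0 < y) (hv : 0 < v) :
    (x + y) * Real.log ((x + y) / (u + v)) ≤ x * Real.log (x / u) + y * Real.log (y / v) := by
  have huv : 0 < u + v := by linarith
  have h := Real.convexOn_mul_log.2 (Set.mem_Ici.mpr (le_of_lt (div_pos hx hu)))
    (Set.mem_Ici.mpr (le_of_lt (div_pos hy hv)))
    (le_of_lt (div_pos hu huv)) (le_of_lt (div_pos hv huv))
    (by field_simp)
  have hcomb : (u / (u + v)) • (x / u) + (v / (u + v)) • (y / v) = (x + y) / (u + v) := by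
    simp only [smul_eq_mul]
    field_simp
  rw [hcomb] at h
  have h' := mul_le_mul_of_nonneg_left h (le_of_lt huv)
  calc (x + y) * Real.log ((x + y) / (u + v))
      = (u + v) * ((x + y) / (u + v) * Real.log ((x + y) / (u + v))) := by
        field_simp
    _ ≤ (u + v) * ((u / (u + v)) • (x / u * Real.log (x / u))
          + (v / (u + v)) • (y / v * Real.log (y / v))) := h'
    _ = x * Real.log (x / u) + y * Real.log (y / v) := by
        simp only [smul_eq_mul]
        field_simp

lemma Freal_eq {r s : ℝ} (hr : 0 < r) (hs : 0 < s) :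
    (r - s) * (Real.log r - Real.log s)
      = r * Real.log (r / s) + s * Real.log (s / r) := by
  rw [Real.log_div hr.ne' hs.ne', Real.log_div hs.ne' hr.ne']
  ring

lemma Freal_convex {a b c d t : ℝ} (ha : 0 < a) (hb : 0 < b) (hc : 0 < c) (hd : 0 < d)
    (ht0 : 0 < t) (ht1 : t < 1) :
    ((t * a + (1 - t) * c) - (t * b + (1 - t) * d))
        * (Real.log (t * a + (1 - t) * c) - Real.log (t * b + (1 - t) * d))
      ≤ t * ((a - b) * (Real.log a - Real.log b))
        + (1 - t) * ((c - d) * (Real.log c - Real.log d)) := by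
  have ht1' : 0 < 1 - t := by linarith
  have hR : 0 < t * a + (1 - t) * c := by positivity
  have hS : 0 < t * b + (1 - t) * d := by positivity
  rw [Freal_eq hR hS, Freal_eq ha hb, Freal_eq hc hd]
  have h1 := logsum (mul_pos ht0 ha) (mul_pos ht0 hb) (mul_pos ht1' hc) (mul_pos ht1' hd)
  have h2 := logsum (mul_pos ht0 hb) (mul_pos ht0 ha) (mul_pos ht1' hd) (mul_pos ht1' hc)
  have e1 : t * a / (t * b) = a / b := by
    rw [mul_div_mul_left _ _ ht0.ne']
  have e2 : (1 - t) * c / ((1 - t) * d) = c / d := by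
    rw [mul_div_mul_left _ _ ht1'.ne']
  have e3 : t * b / (t * a) = b / a := by
    rw [mul_div_mul_left _ _ ht0.ne']
  have e4 : (1 - t) * d / ((1 - t) * c) = d / c := by
    rw [mul_div_mul_left _ _ ht1'.ne']
  rw [e1, e2] at h1
  rw [e3, e4] at h2
  nlinarith [h1, h2]

lemma Fent_homog (lam r s : ℝ) (hlam : 0 < lam) (hr : 0 ≤ r) (hs : 0 ≤ s) :
    Fent (lam * r) (lam * s) = ENNReal.ofReal lam * Fent r s := by
  rcases hr.lt_or_eq with hr' | hr'
  · rcases hs.lt_or_eq with hs' | hs'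
    · have h1 : 0 < lam * r := mul_pos hlam hr'
      have h2 : 0 < lam * s := mul_pos hlam hs'
      rw [Fent, Fent, if_pos ⟨h1, h2⟩, if_pos ⟨hr', hs'⟩,
        ← ENNReal.ofReal_mul hlam.le]
      congr 1
      rw [Real.log_mul hlam.ne' hr'.ne', Real.log_mul hlam.ne' hs'.ne']
      ring
    · -- s = 0, r > 0 : both sides ⊤
      have h1 : 0 < lam * r := mul_pos hlam hr'
      rw [Fent, Fent, ← hs', mul_zero]
      rw [if_neg (by simp), if_neg (by simp [h1.ne']),
        if_neg (by simp), if_neg (by simp [hr'.ne'])]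
      rw [ENNReal.mul_top (by simpa using hlam)]
  · rcases hs.lt_or_eq with hs' | hs'
    · have h2 : 0 < lam * s := mul_pos hlam hs'
      rw [Fent, Fent, ← hr', mul_zero]
      rw [if_neg (by simp), if_neg (by simp [h2.ne']),
        if_neg (by simp), if_neg (by simp [hs'.ne'])]
      rw [ENNReal.mul_top (by simpa using hlam)]
    · rw [← hr', ← hs', mul_zero]
      simp [Fent]

/-- **Joint convexity and positive 1-homogeneity of the Fisher information integrand.**
The function `F(r,s) = (r−s)(log r − log s)` (with `F(0,0)=0`, `F(r,0)=F(0,r)=∞` for `r>0`)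
is jointly convex on `[0,∞)²` and positively 1-homogeneous:
`F(λr, λs) = λ·F(r,s)` for all `λ > 0` and `r,s ≥ 0`. -/
theorem Fent_convex_homogeneous :
    (∀ r₁ s₁ r₂ s₂ t : ℝ, 0 ≤ r₁ → 0 ≤ s₁ → 0 ≤ r₂ → 0 ≤ s₂ →
        t ∈ Set.Icc (0:ℝ) 1 →
        Fent (t * r₁ + (1 - t) * r₂) (t * s₁ + (1 - t) * s₂)
          ≤ ENNReal.ofReal t * Fent r₁ s₁ + ENNReal.ofReal (1 - t) * Fent r₂ s₂)
    ∧ (∀ lam r s : ℝ, 0 < lam → 0 ≤ r → 0 ≤ s →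
        Fent (lam * r) (lam * s) = ENNReal.ofReal lam * Fent r s) := by
  refine ⟨?_, fun lam r s h hr hs => Fent_homog lam r s h hr hs⟩
  rintro r₁ s₁ r₂ s₂ t hr₁ hs₁ hr₂ hs₂ ⟨ht0, ht1⟩
  rcases ht0.lt_or_eq with ht0 | ht0
  swap
  · subst ht0; simp
  rcases ht1.lt_or_eq with ht1 | ht1
  swap
  · subst ht1; simp
  have ht1' : 0 < 1 - t := by linarith
  -- if one of the pair is "mixed" (one zero, one positive), RHS = ⊤
  by_cases hT1 : Fent r₁ s₁ = ⊤
  · rw [hT1, ENNReal.mul_top (by simpa using ht0)]; simp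
  by_cases hT2 : Fent r₂ s₂ = ⊤
  · rw [hT2, ENNReal.mul_top (by simpa using ht1')]; simp
  -- so each pair is either both positive or both zero
  have key : ∀ r s : ℝ, 0 ≤ r → 0 ≤ s → Fent r s ≠ ⊤ → (0 < r ∧ 0 < s) ∨ (r = 0 ∧ s = 0) := by
    intro r s hr hs hT
    by_cases h1 : 0 < r ∧ 0 < s
    · exact Or.inl h1
    · by_cases h2 : r = 0 ∧ s = 0
      · exact Or.inr h2
      · exact absurd (by rw [Fent, if_neg h1, if_neg h2]) hT
  rcases key r₁ s₁ hr₁ hs₁ hT1 with ⟨h1r, h1s⟩ | ⟨h1r, h1s⟩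
  · rcases key r₂ s₂ hr₂ hs₂ hT2 with ⟨h2r, h2s⟩ | ⟨h2r, h2s⟩
    · -- all positive: the real convexity inequality
      have hR : 0 < t * r₁ + (1 - t) * r₂ := by positivity
      have hS : 0 < t * s₁ + (1 - t) * s₂ := by positivity
      rw [Fent, Fent, Fent, if_pos ⟨hR, hS⟩, if_pos ⟨h1r, h1s⟩, if_pos ⟨h2r, h2s⟩,
        ← ENNReal.ofReal_mul ht0.le, ← ENNReal.ofReal_mul ht1'.le,
        ← ENNReal.ofReal_add (mul_nonneg ht0.le (Fent_nonneg_real h1r h1s))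
          (mul_nonneg ht1'.le (Fent_nonneg_real h2r h2s))]
      exact ENNReal.ofReal_le_ofReal (Freal_convex h1r h1s h2r h2s ht0 ht1)
    · -- second pair zero: use homogeneity
      subst h2r; subst h2s
      simp only [mul_zero, add_zero]
      rw [Fent_homog t r₁ s₁ ht0 hr₁ hs₁]
      have : Fent 0 0 = 0 := by simp [Fent]
      rw [this, mul_zero, add_zero]
  · subst h1r; subst h1s
    rcases key r₂ s₂ hr₂ hs₂ hT2 with ⟨h2r, h2s⟩ | ⟨h2r, h2s⟩
    · simp only [mul_zero, zero_add]
      rw [Fent_homog (1 - t) r₂ s₂ ht1' hr₂ hs₂]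
      have : Fent 0 0 = 0 := by simp [Fent]
      rw [this, mul_zero, zero_add]
    · subst h2r; subst h2s
      simp [Fent]
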